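/- For any matrix A ∈ M_{n-1}(ℝ) with symmetric part S(A) = (A+Aᵀ)/2 nonzero, the quantity F(A) = (tr S(A)² + (tr A)²)² / (tr S(A)² (tr S(A)² + (tr A)²) + (1/4)|[A,Aᵀ]|²) satisfies F(A) ≤ 1 + (tr A)²/tr S(A)² ≤ n, where equality in the first inequality holds if and only if A is normal (i.e. [A,Aᵀ] = 0). -/

import Mathlib

open Matrix

/-- Symmetric part `S(A) = (A + Aᵀ)/2`. -/
noncomputable def Ssym {m : ℕ} (A : Matrix (Fin m) (Fin m) ℝ) : Matrix (Fin m) (Fin m) ℝ :=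
  (1 / 2 : ℝ) • (A + Aᵀ)

/-- Commutator of matrices. -/
def brk {m : ℕ} (X Y : Matrix (Fin m) (Fin m) ℝ) : Matrix (Fin m) (Fin m) ℝ :=
  X * Y - Y * X

/-- Squared norm `|X|² = tr (X Xᵀ)`. -/
noncomputable def nsq {m : ℕ} (X : Matrix (Fin m) (Fin m) ℝ) : ℝ :=
  (X * Xᵀ).trace

/-- The Ricci pinching functional of the almost-abelian solvmanifold attached to `A`:
`F(A) = (tr S(A)² + (tr A)²)² / (tr S(A)² (tr S(A)² + (tr A)²) + ¼|[A,Aᵀ]|²)`. -/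
noncomputable def Fpinch {m : ℕ} (A : Matrix (Fin m) (Fin m) ℝ) : ℝ :=
  ((Ssym A * Ssym A).trace + A.trace ^ 2) ^ 2 /
    ((Ssym A * Ssym A).trace * ((Ssym A * Ssym A).trace + A.trace ^ 2)
      + (1 / 4) * nsq (brk A Aᵀ))

lemma nsq_eq_sum {m : ℕ} (X : Matrix (Fin m) (Fin m) ℝ) :
    nsq X = ∑ i, ∑ j, (X i j) ^ 2 := by
  simp [nsq, Matrix.trace, Matrix.mul_apply, Matrix.diag, sq]

lemma nsq_nonneg {m : ℕ} (X : Matrix (Fin m) (Fin m) ℝ) : 0 ≤ nsq X := by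
  rw [nsq_eq_sum]; positivity

lemma nsq_eq_zero_iff {m : ℕ} (X : Matrix (Fin m) (Fin m) ℝ) : nsq X = 0 ↔ X = 0 := by
  rw [nsq_eq_sum]
  constructor
  · intro h
    ext i j
    have h1 : ∀ i ∈ Finset.univ, (0:ℝ) ≤ ∑ j, (X i j) ^ 2 := fun i _ => by positivity
    have h2 := (Finset.sum_eq_zero_iff_of_nonneg h1).mp h i (Finset.mem_univ i)
    have h3 : ∀ j ∈ Finset.univ, (0:ℝ) ≤ (X i j) ^ 2 := fun j _ => by positivity
    have := (Finset.sum_eq_zero_iff_of_nonneg h3).mp h2 j (Finset.mem_univ j)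
    simpa [pow_eq_zero_iff] using this
  · intro h; simp [h]

lemma Ssym_transpose {m : ℕ} (A : Matrix (Fin m) (Fin m) ℝ) : (Ssym A)ᵀ = Ssym A := by
  simp [Ssym, Matrix.transpose_add, add_comm]

lemma trace_Ssym {m : ℕ} (A : Matrix (Fin m) (Fin m) ℝ) : (Ssym A).trace = A.trace := by
  simp [Ssym]; ring

theorem stmt_3 (m : ℕ) (A : Matrix (Fin m) (Fin m) ℝ) (hS : Ssym A ≠ 0) :
    Fpinch A ≤ 1 + A.trace ^ 2 / (Ssym A * Ssym A).trace ∧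
    1 + A.trace ^ 2 / (Ssym A * Ssym A).trace ≤ (m + 1 : ℝ) ∧
    (Fpinch A = 1 + A.trace ^ 2 / (Ssym A * Ssym A).trace ↔ A * Aᵀ = Aᵀ * A) := by
  set S := Ssym A with hSdef
  have hs_eq : (S * S).trace = nsq S := by
    rw [nsq]; rw [Ssym_transpose]
  have hs_pos : 0 < (S * S).trace := by
    rw [hs_eq]
    rcases lt_or_eq_of_le (nsq_nonneg S) with h | h
    · exact h
    · exact absurd ((nsq_eq_zero_iff S).mp h.symm) hS
  set s := (S * S).trace with hsdef
  set t := A.trace with htdef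
  set q := (1 / 4 : ℝ) * nsq (brk A Aᵀ) with hqdef
  have hq_nonneg : 0 ≤ q := by
    have := nsq_nonneg (brk A Aᵀ); positivity
  set P := s + t ^ 2 with hPdef
  have hP_pos : 0 < P := by positivity
  have hFe : Fpinch A = P ^ 2 / (s * P + q) := rfl
  have hrhs : 1 + t ^ 2 / s = P / s := by field_simp [hPdef]; exact hPdef.symm
  have hden_pos : 0 < s * P + q := by positivity
  refine ⟨?_, ?_, ?_⟩
  · rw [hFe, hrhs, div_le_div_iff₀ hden_pos hs_pos]
    nlinarith [mul_nonneg hP_pos.le hq_nonneg]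
  · -- Cauchy-Schwarz: t² ≤ m * s
    have hts : t ^ 2 ≤ (m : ℝ) * s := by
      have h1 : t = ∑ i, S i i := by
        rw [htdef, ← trace_Ssym A]; rfl
      have h2 : ∑ i, (S i i) ^ 2 ≤ s := by
        rw [hs_eq, nsq_eq_sum]
        apply Finset.sum_le_sum
        intro i _
        exact Finset.single_le_sum (f := fun j => (S i j)^2)
          (fun j _ => by positivity) (Finset.mem_univ i)
      have h3 : (∑ i, S i i) ^ 2 ≤ (m : ℝ) * ∑ i, (S i i) ^ 2 := by
        have := sq_sum_le_card_mul_sum_sq (s := (Finset.univ : Finset (Fin m)))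
          (f := fun i => S i i)
        simpa using this
      rw [h1]
      calc (∑ i, S i i) ^ 2 ≤ (m : ℝ) * ∑ i, (S i i) ^ 2 := h3
        _ ≤ (m : ℝ) * s := mul_le_mul_of_nonneg_left h2 (by positivity)
    rw [hrhs, div_le_iff₀ hs_pos] at *
    nlinarith
  · rw [hFe, hrhs]
    constructor
    · intro h
      rw [div_eq_div_iff hden_pos.ne' hs_pos.ne'] at h
      have hq0 : q = 0 := by nlinarith
      have : nsq (brk A Aᵀ) = 0 := by
        rw [hqdef] at hq0; linarith
      have hb := (nsq_eq_zero_iff _).mp this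
      exact sub_eq_zero.mp hb
    · intro h
      have hb : brk A Aᵀ = 0 := by rw [brk, h, sub_self]
      have hq0 : q = 0 := by
        rw [hqdef, hb, (nsq_eq_zero_iff (0 : Matrix (Fin m) (Fin m) ℝ)).mpr rfl, mul_zero]
      rw [hq0, add_zero, div_eq_div_iff (by positivity) hs_pos.ne']
      ring
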